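/- Let Ω ⊆ ℝ^n be open and let u : ℝ^n → [0,∞) be a measurable function whose support is compactly contained in Ω and such that for every s ≥ 0 the superlevel set {x : u(x) > s} is K-outward minimizing in Ω with Per_K({u > s},Ω) < ∞. Then for every measurable v : ℝ^n → [0,∞) with v ≥ u almost everywhere and support compactly contained in Ω, one has J_K(u) ≤ J_K(v). -/

import Mathlib

open MeasureTheory Set Filter Metric Topology
open scoped ENNReal Pointwise

noncomputable section

abbrev Euc (n : ℕ) := EuclideanSpace ℝ (Fin n)

/-- Admissible kernel: measurable, nonnegative and even away from the origin,
with `∫ min(1,|x|) K(x) dx < ∞`. -/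
def KernelOK {n : ℕ} (K : Euc n → ℝ) : Prop :=
  Measurable K ∧ (∀ x : Euc n, x ≠ 0 → 0 ≤ K x) ∧ (∀ x : Euc n, x ≠ 0 → K (-x) = K x) ∧
    (∫⁻ x : Euc n, ENNReal.ofReal (min 1 ‖x‖ * K x)) < ⊤

/-- The `K`-perimeter of `E` in `Ω`. -/
def perK {n : ℕ} (K : Euc n → ℝ) (E Ω : Set (Euc n)) : ℝ≥0∞ :=
  (∫⁻ x in E, ∫⁻ y in Ω \ E, ENNReal.ofReal (K (x - y))) +
  (∫⁻ x in E ∩ Ω, ∫⁻ y in (Ω ∪ E)ᶜ, ENNReal.ofReal (K (x - y)))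

/-- The (total) `K`-perimeter of `E`. -/
def perKtot {n : ℕ} (K : Euc n → ℝ) (E : Set (Euc n)) : ℝ≥0∞ :=
  ∫⁻ x in E, ∫⁻ y in Eᶜ, ENNReal.ofReal (K (x - y))

/-- `A` is compactly contained in `Ω`. -/
def CptIn {n : ℕ} (A Ω : Set (Euc n)) : Prop :=
  IsCompact (closure A) ∧ closure A ⊆ Ω

/-- `E` is `K`-outward minimizing in `Ω`. -/
def OutMin {n : ℕ} (K : Euc n → ℝ) (E Ω : Set (Euc n)) : Prop :=
  ∀ F : Set (Euc n), MeasurableSet F → E ⊆ F → CptIn (F \ E) Ω →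
    perK K E Ω ≤ perK K F Ω

/-- `E` is strongly `K`-outward minimizing in `Ω` with constant `δ`. -/
def StrongOutMin {n : ℕ} (K : Euc n → ℝ) (δ : ℝ) (E Ω : Set (Euc n)) : Prop :=
  ∀ F : Set (Euc n), MeasurableSet F → E ⊆ F → CptIn (F \ E) Ω →
    perK K E Ω + ENNReal.ofReal δ * volume (F \ E) ≤ perK K F Ω

end
noncomputable section
open MeasureTheory Set Filter Metric Topology
open scoped ENNReal Pointwise

/-- The truncated `K`-curvature of `G` at `x`, with truncation parameter `ε`:
`∫_{ℝⁿ∖B(x,ε)} (χ_{Gᶜ}(y) − χ_G(y)) K(x−y) dy`. -/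
def truncCurv {n : ℕ} (K : Euc n → ℝ) (G : Set (Euc n)) (x : Euc n) (ε : ℝ) : ℝ :=
  ∫ y in (Metric.ball x ε)ᶜ,
    ((Gᶜ).indicator (fun _ => (1:ℝ)) y - G.indicator (fun _ => (1:ℝ)) y) * K (x - y)

/-- `G` has compact boundary of class `C^{1,1}`: the boundary is compact, and `G` is the
sublevel set of a `C^1` function with Lipschitz gradient which is nondegenerate on the
boundary. -/
def HasCptC11Boundary {n : ℕ} (G : Set (Euc n)) : Prop :=
  IsCompact (frontier G) ∧
  ∃ φ : Euc n → ℝ, ContDiff ℝ 1 φ ∧ (∃ L : NNReal, LipschitzWith L (fderiv ℝ φ)) ∧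
    G = {x | φ x ≤ 0} ∧ frontier G = {x | φ x = 0} ∧
    ∀ x ∈ frontier G, fderiv ℝ φ x ≠ 0

/-- `H^K_A(x) ≥ c` in the viscosity sense: every set `G` with compact `C^{1,1}` boundary
with `G ⊆ A` and `x ∈ ∂G` has `K`-curvature at least `c` at `x` (the curvature being the
limit of the truncated curvatures). -/
def ViscCurvGE {n : ℕ} (K : Euc n → ℝ) (A : Set (Euc n)) (x : Euc n) (c : ℝ) : Prop :=
  ∀ G : Set (Euc n), HasCptC11Boundary G → G ⊆ A → x ∈ frontier G →
    ∀ L : ℝ, Tendsto (truncCurv K G x) (𝓝[>] (0:ℝ)) (𝓝 L) → c ≤ L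

/-- Signed distance function from `E` (positive inside). -/
def sgnDist {n : ℕ} (E : Set (Euc n)) (x : Euc n) : ℝ :=
  Metric.infDist x Eᶜ - Metric.infDist x E

/-- The Almgren–Taylor–Wang energy `Per_K(G) − (1/h)∫_G d_E`. -/
def atwEnergy {n : ℕ} (K : Euc n → ℝ) (E : Set (Euc n)) (h : ℝ) (G : Set (Euc n)) : ℝ :=
  (perKtot K G).toReal - (1/h) * ∫ x in G, sgnDist E x

/-- `T` is an ATW minimizer for `E` at step `h`: it minimizes the ATW energy among all
measurable sets (competitors with infinite energy being irrelevant). -/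
def ATWMin {n : ℕ} (K : Euc n → ℝ) (E : Set (Euc n)) (h : ℝ) (T : Set (Euc n)) : Prop :=
  MeasurableSet T ∧ perKtot K T < ⊤ ∧ IntegrableOn (sgnDist E) T ∧
  ∀ G : Set (Euc n), MeasurableSet G → perKtot K G < ⊤ → IntegrableOn (sgnDist E) G →
    atwEnergy K E h T ≤ atwEnergy K E h G

/-- The set of Lebesgue density-one points of `T`. -/
def densityPts {n : ℕ} (T : Set (Euc n)) : Set (Euc n) :=
  {x | Tendsto (fun ρ : ℝ =>
      volume (T ∩ Metric.closedBall x ρ) / volume (Metric.closedBall x ρ))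
    (𝓝[>] (0:ℝ)) (𝓝 1)}

/-- The nonlocal functional `J_K(v) = ½∬ |v(x)−v(y)| K(x−y) dx dy`. -/
def JK {n : ℕ} (K : Euc n → ℝ) (v : Euc n → ℝ) : ℝ≥0∞ :=
  (1/2 : ℝ≥0∞) * ∫⁻ x : Euc n, ∫⁻ y : Euc n,
    ENNReal.ofReal |v x - v y| * ENNReal.ofReal (K (x - y))

end

open MeasureTheory Set Filter Metric Topology
open scoped ENNReal

section AuxProof
open MeasureTheory Set Filter Metric Topology
open scoped ENNReal

/-- Layer-cake formula for `|a - b|` with `a b ≥ 0`. -/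
private lemma layercake_pt (a b : ℝ) (ha : 0 ≤ a) (hb : 0 ≤ b) :
    ∫⁻ s in Ioi (0:ℝ),
      ((Iio a).indicator (fun _ => (1:ℝ≥0∞)) s * ((Iio b)ᶜ).indicator (fun _ => 1) s
        + ((Iio a)ᶜ).indicator (fun _ => (1:ℝ≥0∞)) s * (Iio b).indicator (fun _ => 1) s)
      = ENNReal.ofReal |a - b| := by
  have hIco : ∀ c d : ℝ, 0 ≤ c → volume (Ico c d ∩ Ioi 0) = ENNReal.ofReal (d - c) := by
    intro c d hc
    refine le_antisymm ?_ ?_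
    · calc volume (Ico c d ∩ Ioi 0) ≤ volume (Ico c d) := measure_mono inter_subset_left
        _ = ENNReal.ofReal (d - c) := Real.volume_Ico
    · calc ENNReal.ofReal (d - c) = volume (Ioo c d) := Real.volume_Ioo.symm
        _ ≤ volume (Ico c d ∩ Ioi 0) :=
          measure_mono (fun s hs => ⟨⟨hs.1.le, hs.2⟩, lt_of_le_of_lt hc hs.1⟩)
  have hfun : ∀ s : ℝ,
      ((Iio a).indicator (fun _ => (1:ℝ≥0∞)) s * ((Iio b)ᶜ).indicator (fun _ => 1) s
        + ((Iio a)ᶜ).indicator (fun _ => (1:ℝ≥0∞)) s * (Iio b).indicator (fun _ => 1) s)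
      = (Ico b a).indicator (fun _ => (1:ℝ≥0∞)) s + (Ico a b).indicator (fun _ => 1) s := by
    intro s
    simp only [Set.indicator_apply, Set.mem_Iio, Set.mem_compl_iff, Set.mem_Ico, not_lt]
    by_cases h1 : s < a <;> by_cases h2 : s < b <;>
      simp [h1, h2, not_lt.mp, le_of_lt, not_lt]
  calc ∫⁻ s in Ioi (0:ℝ),
        ((Iio a).indicator (fun _ => (1:ℝ≥0∞)) s * ((Iio b)ᶜ).indicator (fun _ => 1) s
          + ((Iio a)ᶜ).indicator (fun _ => (1:ℝ≥0∞)) s * (Iio b).indicator (fun _ => 1) s)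
      = ∫⁻ s in Ioi (0:ℝ),
          ((Ico b a).indicator (fun _ => (1:ℝ≥0∞)) s + (Ico a b).indicator (fun _ => 1) s) :=
        lintegral_congr hfun
    _ = volume (Ico b a ∩ Ioi 0) + volume (Ico a b ∩ Ioi 0) := by
        rw [lintegral_add_left (measurable_const.indicator measurableSet_Ico)]
        simp only [lintegral_indicator measurableSet_Ico, setLIntegral_one,
          Measure.restrict_apply measurableSet_Ico]
    _ = ENNReal.ofReal (a - b) + ENNReal.ofReal (b - a) := by
        rw [hIco b a hb, hIco a b ha]
    _ = ENNReal.ofReal |a - b| := by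
        rcases le_total a b with h | h
        · rw [abs_of_nonpos (by linarith), ENNReal.ofReal_of_nonpos (by linarith), zero_add]
          norm_num
        · rw [abs_of_nonneg (by linarith),
            ENNReal.ofReal_of_nonpos (show b - a ≤ 0 by linarith), add_zero]

end AuxProof

section AuxProof2
open MeasureTheory Set Filter Metric Topology
open scoped ENNReal

variable {n : ℕ}

private lemma measKK {K : Euc n → ℝ} (hKm : Measurable K) :
    Measurable fun p : Euc n × Euc n => ENNReal.ofReal (K (p.1 - p.2)) :=
  ENNReal.measurable_ofReal.comp (hKm.comp (measurable_fst.sub measurable_snd))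

/-- The symmetrized double integral over `E × Eᶜ ∪ Eᶜ × E` is twice the perimeter. -/
private lemma double_perKtot {K : Euc n → ℝ} (hKm : Measurable K)
    (hKe : ∀ x : Euc n, x ≠ 0 → K (-x) = K x) {E : Set (Euc n)} (hE : MeasurableSet E) :
    ∫⁻ x : Euc n, ∫⁻ y : Euc n,
      (E.indicator (fun _ => (1:ℝ≥0∞)) x * Eᶜ.indicator (fun _ => 1) y
        + Eᶜ.indicator (fun _ => (1:ℝ≥0∞)) x * E.indicator (fun _ => 1) y)
        * ENNReal.ofReal (K (x - y))
      = 2 * perKtot K E := by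
  have hky : ∀ x : Euc n, Measurable fun y : Euc n => ENNReal.ofReal (K (x - y)) := fun x =>
    ENNReal.measurable_ofReal.comp (hKm.comp (measurable_const.sub measurable_id))
  have hind : ∀ (S : Set (Euc n)), MeasurableSet S → ∀ x : Euc n,
      (∫⁻ y : Euc n, S.indicator (fun _ => (1:ℝ≥0∞)) y * ENNReal.ofReal (K (x - y)))
        = ∫⁻ y in S, ENNReal.ofReal (K (x - y)) := by
    intro S hS x
    rw [← lintegral_indicator hS]
    refine lintegral_congr fun y => ?_
    by_cases hy : y ∈ S <;> simp [hy]
  have step1 : ∀ x : Euc n,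
      (∫⁻ y : Euc n,
        (E.indicator (fun _ => (1:ℝ≥0∞)) x * Eᶜ.indicator (fun _ => 1) y
          + Eᶜ.indicator (fun _ => (1:ℝ≥0∞)) x * E.indicator (fun _ => 1) y)
          * ENNReal.ofReal (K (x - y)))
      = E.indicator (fun _ => (1:ℝ≥0∞)) x * (∫⁻ y in Eᶜ, ENNReal.ofReal (K (x - y)))
        + Eᶜ.indicator (fun _ => (1:ℝ≥0∞)) x * (∫⁻ y in E, ENNReal.ofReal (K (x - y))) := by
    intro x
    have hrw : ∀ y : Euc n,
        (E.indicator (fun _ => (1:ℝ≥0∞)) x * Eᶜ.indicator (fun _ => 1) y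
          + Eᶜ.indicator (fun _ => (1:ℝ≥0∞)) x * E.indicator (fun _ => 1) y)
          * ENNReal.ofReal (K (x - y))
        = E.indicator (fun _ => (1:ℝ≥0∞)) x * (Eᶜ.indicator (fun _ => 1) y * ENNReal.ofReal (K (x - y)))
          + Eᶜ.indicator (fun _ => (1:ℝ≥0∞)) x * (E.indicator (fun _ => 1) y * ENNReal.ofReal (K (x - y))) :=
      fun y => by ring
    rw [lintegral_congr hrw,
      lintegral_add_left (show Measurable fun y : Euc n => E.indicator (fun _ => (1:ℝ≥0∞)) x
        * (Eᶜ.indicator (fun _ => 1) y * ENNReal.ofReal (K (x - y))) from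
        (((measurable_const).indicator hE.compl).mul (hky x) |>.const_mul _)),
      lintegral_const_mul' _ _ (by by_cases hx : x ∈ E <;> simp [hx]),
      lintegral_const_mul' _ _ (by by_cases hx : x ∈ Eᶜ <;> simp [hx]),
      hind Eᶜ hE.compl x, hind E hE x]
  rw [lintegral_congr step1]
  have hmeas1 : Measurable fun x : Euc n =>
      E.indicator (fun _ => (1:ℝ≥0∞)) x * ∫⁻ y in Eᶜ, ENNReal.ofReal (K (x - y)) :=
    (measurable_const.indicator hE).mul
      (Measurable.lintegral_prod_right (f := fun x y => ENNReal.ofReal (K (x - y))) (measKK hKm))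
  rw [lintegral_add_left hmeas1]
  have hE1 : (∫⁻ x : Euc n, E.indicator (fun _ => (1:ℝ≥0∞)) x
      * ∫⁻ y in Eᶜ, ENNReal.ofReal (K (x - y)))
      = ∫⁻ x in E, ∫⁻ y in Eᶜ, ENNReal.ofReal (K (x - y)) := by
    rw [← lintegral_indicator hE]
    refine lintegral_congr fun x => ?_
    by_cases hx : x ∈ E <;> simp [hx]
  have hE2 : (∫⁻ x : Euc n, Eᶜ.indicator (fun _ => (1:ℝ≥0∞)) x
      * ∫⁻ y in E, ENNReal.ofReal (K (x - y)))
      = ∫⁻ x in Eᶜ, ∫⁻ y in E, ENNReal.ofReal (K (x - y)) := by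
    rw [← lintegral_indicator hE.compl]
    refine lintegral_congr fun x => ?_
    by_cases hx : x ∈ Eᶜ <;> simp [hx]
  have hswap : (∫⁻ x in Eᶜ, ∫⁻ y in E, ENNReal.ofReal (K (x - y)))
      = ∫⁻ x in E, ∫⁻ y in Eᶜ, ENNReal.ofReal (K (x - y)) := by
    rw [lintegral_lintegral_swap (measKK hKm).aemeasurable]
    refine setLIntegral_congr_fun hE (fun a ha => ?_)
    refine setLIntegral_congr_fun hE.compl (fun b hb => ?_)
    have hab : a - b ≠ 0 := sub_ne_zero.mpr (fun h => hb (h ▸ ha))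
    rw [← neg_sub a b, hKe _ hab]
  rw [hE1, hE2, hswap, perKtot, two_mul]

/-- Coarea / layer-cake for `J_K`. -/
private lemma JK_coarea {K : Euc n → ℝ} (hKm : Measurable K)
    (hKe : ∀ x : Euc n, x ≠ 0 → K (-x) = K x)
    {w : Euc n → ℝ} (hw : Measurable w) (hw0 : ∀ x, 0 ≤ w x) :
    JK K w = ∫⁻ s in Ioi (0:ℝ), perKtot K {x | s < w x} := by
  set F : ℝ → Euc n → Euc n → ℝ≥0∞ := fun s x y =>
    ({x' | s < w x'}.indicator (fun _ => (1:ℝ≥0∞)) x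
        * ({x' | s < w x'}ᶜ).indicator (fun _ => 1) y
      + ({x' | s < w x'}ᶜ).indicator (fun _ => (1:ℝ≥0∞)) x
        * {x' | s < w x'}.indicator (fun _ => 1) y)
      * ENNReal.ofReal (K (x - y)) with hF
  have hS : MeasurableSet {p : ℝ × Euc n | p.1 < w p.2} :=
    measurableSet_lt measurable_fst (hw.comp measurable_snd)
  have hind : ∀ (g : ℝ × Euc n × Euc n → Euc n), Measurable g →
      Measurable fun q : ℝ × Euc n × Euc n =>
        ({x' | q.1 < w x'}).indicator (fun _ => (1:ℝ≥0∞)) (g q) := by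
    intro g hg
    have hrw : (fun q : ℝ × Euc n × Euc n =>
        ({x' | q.1 < w x'}).indicator (fun _ => (1:ℝ≥0∞)) (g q))
        = fun q => ({p : ℝ × Euc n | p.1 < w p.2}).indicator (fun _ => (1:ℝ≥0∞)) (q.1, g q) := by
      funext q
      by_cases h : q.1 < w (g q) <;> simp [h]
    rw [hrw]
    exact (measurable_const.indicator hS).comp (measurable_fst.prodMk hg)
  have hindc : ∀ (g : ℝ × Euc n × Euc n → Euc n), Measurable g →
      Measurable fun q : ℝ × Euc n × Euc n =>
        (({x' | q.1 < w x'})ᶜ).indicator (fun _ => (1:ℝ≥0∞)) (g q) := by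
    intro g hg
    have hrw : (fun q : ℝ × Euc n × Euc n =>
        (({x' | q.1 < w x'})ᶜ).indicator (fun _ => (1:ℝ≥0∞)) (g q))
        = fun q => (({p : ℝ × Euc n | p.1 < w p.2})ᶜ).indicator (fun _ => (1:ℝ≥0∞)) (q.1, g q) := by
      funext q
      by_cases h : q.1 < w (g q) <;> simp [h]
    rw [hrw]
    exact (measurable_const.indicator hS.compl).comp (measurable_fst.prodMk hg)
  have hFmeas : Measurable fun q : ℝ × Euc n × Euc n => F q.1 q.2.1 q.2.2 := by
    refine Measurable.mul (Measurable.add (Measurable.mul ?_ ?_) (Measurable.mul ?_ ?_)) ?_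
    · exact hind _ (measurable_fst.comp measurable_snd)
    · exact hindc _ (measurable_snd.comp measurable_snd)
    · exact hindc _ (measurable_fst.comp measurable_snd)
    · exact hind _ (measurable_snd.comp measurable_snd)
    · exact ENNReal.measurable_ofReal.comp (hKm.comp
        ((measurable_fst.comp measurable_snd).sub (measurable_snd.comp measurable_snd)))
  have key : ∀ x y : Euc n,
      ENNReal.ofReal |w x - w y| * ENNReal.ofReal (K (x - y))
        = ∫⁻ s in Ioi (0:ℝ), F s x y := by
    intro x y
    rw [← layercake_pt (w x) (w y) (hw0 x) (hw0 y),
      ← lintegral_mul_const' (ENNReal.ofReal (K (x - y))) _ ENNReal.ofReal_ne_top]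
    refine lintegral_congr fun s => ?_
    simp only [hF]
    by_cases h1 : s < w x <;> by_cases h2 : s < w y <;>
      simp [h1, h2, Set.indicator_apply, not_lt]
  calc JK K w
      = (1/2 : ℝ≥0∞) * ∫⁻ x : Euc n, ∫⁻ y : Euc n, ∫⁻ s in Ioi (0:ℝ), F s x y := by
        simp only [JK]
        congr 1
        exact lintegral_congr fun x => lintegral_congr fun y => key x y
    _ = (1/2 : ℝ≥0∞) * ∫⁻ x : Euc n, ∫⁻ s in Ioi (0:ℝ), ∫⁻ y : Euc n, F s x y := by
        congr 1
        refine lintegral_congr fun x => ?_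
        exact lintegral_lintegral_swap
          ((hFmeas.comp (measurable_snd.prodMk
            (measurable_const.prodMk measurable_fst))).aemeasurable)
    _ = (1/2 : ℝ≥0∞) * ∫⁻ s in Ioi (0:ℝ), ∫⁻ x : Euc n, ∫⁻ y : Euc n, F s x y := by
        congr 1
        exact lintegral_lintegral_swap
          ((Measurable.lintegral_prod_right
            (f := fun (p : Euc n × ℝ) (y : Euc n) => F p.2 p.1 y)
            (hFmeas.comp ((measurable_snd.comp measurable_fst).prodMk
              ((measurable_fst.comp measurable_fst).prodMk measurable_snd)))).aemeasurable)
    _ = ∫⁻ s in Ioi (0:ℝ), perKtot K {x | s < w x} := by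
        rw [← lintegral_const_mul' (1/2 : ℝ≥0∞) _ (by norm_num)]
        refine lintegral_congr fun s => ?_
        have hEs : MeasurableSet {x : Euc n | s < w x} := measurableSet_lt measurable_const hw
        rw [hF]
        rw [double_perKtot hKm hKe hEs, ← mul_assoc, one_div,
          ENNReal.inv_mul_cancel (by norm_num) (by simp), one_mul]

/-- For a measurable `E ⊆ Ω`, the `K`-perimeter in `Ω` is the total `K`-perimeter. -/
private lemma perK_eq_perKtot {K : Euc n → ℝ} (hKm : Measurable K) {E Ω : Set (Euc n)}
    (hE : MeasurableSet E) (hΩ : MeasurableSet Ω) (hEΩ : E ⊆ Ω) :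
    perK K E Ω = perKtot K E := by
  have h1 : E ∩ Ω = E := inter_eq_left.mpr hEΩ
  have h2 : Ω ∪ E = Ω := union_eq_self_of_subset_right hEΩ
  have hset : (Ω \ E) ∪ Ωᶜ = Eᶜ := by
    ext z
    simp only [mem_union, mem_diff, mem_compl_iff]
    constructor
    · rintro (⟨_, h⟩ | h)
      · exact h
      · exact fun hzE => h (hEΩ hzE)
    · intro h
      by_cases hz : z ∈ Ω
      · exact Or.inl ⟨hz, h⟩
      · exact Or.inr hz
  rw [perK, perKtot, h1, h2]
  have hmeas : Measurable fun x : Euc n => ∫⁻ y in Ω \ E, ENNReal.ofReal (K (x - y)) :=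
    Measurable.lintegral_prod_right (f := fun x y => ENNReal.ofReal (K (x - y))) (measKK hKm)
  rw [← lintegral_add_left hmeas]
  refine lintegral_congr fun x => ?_
  rw [← lintegral_union hΩ.compl (disjoint_compl_right.mono_left diff_subset), hset]

/-- `perKtot` only depends on the a.e. equivalence class of the set. -/
private lemma perKtot_congr {K : Euc n → ℝ} {E F : Set (Euc n)}
    (h : E =ᵐ[volume] F) : perKtot K E = perKtot K F := by
  have hc : Eᶜ =ᵐ[volume] Fᶜ := MeasureTheory.ae_eq_set_compl_compl.mpr h
  rw [perKtot, perKtot, Measure.restrict_congr_set h]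
  exact lintegral_congr fun x => setLIntegral_congr hc

end AuxProof2

/-- a nonnegative function whose superlevel sets are `K`-outward minimizing
in `Ω` minimizes `J_K` among larger functions supported compactly in `Ω`. -/
theorem JK_min_of_outMin_levels {n : ℕ} (K : Euc n → ℝ) (hK : KernelOK K)
    (Ω : Set (Euc n)) (hΩ : IsOpen Ω) (u : Euc n → ℝ) (hu : Measurable u)
    (hupos : ∀ x, 0 ≤ u x) (husupp : CptIn (Function.support u) Ω)
    (hlevel : ∀ s : ℝ, 0 ≤ s →
      OutMin K {x : Euc n | s < u x} Ω ∧ perK K {x : Euc n | s < u x} Ω < ⊤) :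
    ∀ v : Euc n → ℝ, Measurable v → (∀ x, 0 ≤ v x) → (∀ᵐ x : Euc n, u x ≤ v x) →
      CptIn (Function.support v) Ω → JK K u ≤ JK K v := by
  intro v hv hv0 huv hvsupp
  rw [JK_coarea hK.1 hK.2.2.1 hu hupos, JK_coarea hK.1 hK.2.2.1 hv hv0]
  refine lintegral_mono_ae ?_
  filter_upwards [ae_restrict_mem measurableSet_Ioi] with s hs
  set E : Set (Euc n) := {x | s < u x} with hEdef
  set V : Set (Euc n) := {x | s < v x} with hVdef
  have hEm : MeasurableSet E := measurableSet_lt measurable_const hu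
  have hVm : MeasurableSet V := measurableSet_lt measurable_const hv
  have hEsupp : E ⊆ Function.support u := fun x hx => ne_of_gt (lt_trans hs hx)
  have hVsupp : V ⊆ Function.support v := fun x hx => ne_of_gt (lt_trans hs hx)
  have hEΩ : E ⊆ Ω := fun x hx => husupp.2 (subset_closure (hEsupp hx))
  have hVΩ : V ⊆ Ω := fun x hx => hvsupp.2 (subset_closure (hVsupp hx))
  have hF'm : MeasurableSet (V ∪ E) := hVm.union hEm
  have hcpt : CptIn ((V ∪ E) \ E) Ω := by
    have hsub : (V ∪ E) \ E ⊆ Function.support v := fun x hx =>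
      hVsupp (hx.1.resolve_right hx.2)
    exact ⟨hvsupp.1.of_isClosed_subset isClosed_closure (closure_mono hsub),
      (closure_mono hsub).trans hvsupp.2⟩
  have hmin := (hlevel s (le_of_lt hs)).1 (V ∪ E) hF'm subset_union_right hcpt
  have hae : (V ∪ E : Set (Euc n)) =ᵐ[volume] V := by
    rw [MeasureTheory.ae_eq_set]
    constructor
    · refine measure_mono_null (fun x hx => ?_) (ae_iff.mp huv)
      have hxE : x ∈ E := hx.1.resolve_left hx.2
      have hxV : x ∉ V := hx.2
      simp only [mem_setOf_eq, not_le]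
      have : v x ≤ s := not_lt.mp hxV
      exact lt_of_le_of_lt this hxE
    · rw [Set.diff_eq_empty.mpr subset_union_left]
      exact measure_empty
  calc perKtot K E = perK K E Ω :=
        (perK_eq_perKtot hK.1 hEm hΩ.measurableSet hEΩ).symm
    _ ≤ perK K (V ∪ E) Ω := hmin
    _ = perKtot K (V ∪ E) :=
        perK_eq_perKtot hK.1 hF'm hΩ.measurableSet (union_subset hVΩ hEΩ)
    _ = perKtot K V := perKtot_congr hae
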